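/- Let i be a nonzero integer and T a finitely generated abelian group. Then the additive endomorphism of T ⊗_ℤ K₀ given by x ↦ pⁱ·(1⊗σ)(x) − x is bijective. -/

import Mathlib

open TensorProduct

set_option synthInstance.maxHeartbeats 1000000
set_option maxHeartbeats 1000000

/-- `K₀`: the fraction field of the ring of `p`-typical Witt vectors of the finite
field `𝔽_q` with `q = p^f` elements. -/
abbrev K0 (p f : ℕ) [Fact p.Prime] : Type :=
  FractionRing (WittVector p (GaloisField p f))

/-- `ℚ_p`, realized as the fraction field of `W(𝔽_p)`. -/
abbrev Qp (p : ℕ) [Fact p.Prime] : Type :=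
  FractionRing (WittVector p (ZMod p))

/-- The Frobenius `σ` of `K₀`, induced by the Witt vector Frobenius of `W(𝔽_q)`. -/
noncomputable def sigma (p f : ℕ) [Fact p.Prime] : K0 p f ≃+* K0 p f :=
  WittVector.FractionRing.frobenius p (GaloisField p f)

/-- The embedding `ℚ_p → K₀` induced by `W(𝔽_p) → W(𝔽_q)`. -/
noncomputable def iota (p f : ℕ) [Fact p.Prime] : Qp p →+* K0 p f :=
  IsFractionRing.lift
    (g := (algebraMap (WittVector p (GaloisField p f)) (K0 p f)).comp
      (WittVector.map (algebraMap (ZMod p) (GaloisField p f))))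
    (by
      rw [RingHom.coe_comp]
      exact Function.Injective.comp (IsFractionRing.injective _ _)
        (WittVector.map_injective _ (RingHom.injective _)))

/-- `σ` as a `ℤ`-linear endomorphism of `K₀`. -/
noncomputable def sigmaLin (p f : ℕ) [Fact p.Prime] : K0 p f →ₗ[ℤ] K0 p f :=
  AddMonoidHom.toIntLinearMap (sigma p f).toRingHom.toAddMonoidHom

/-- `ι : ℚ_p → K₀` as a `ℤ`-linear map. -/
noncomputable def iotaLin (p f : ℕ) [Fact p.Prime] : Qp p →ₗ[ℤ] K0 p f :=
  AddMonoidHom.toIntLinearMap (iota p f).toAddMonoidHom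

/-- The `ℤ`-linear endomorphism `a ↦ pⁱ·σ(a)` of `K₀` (with `pⁱ ∈ K₀` the `zpow`). -/
noncomputable def twist (p f : ℕ) [Fact p.Prime] (i : ℤ) : K0 p f →ₗ[ℤ] K0 p f :=
  ((p : K0 p f) ^ i) • sigmaLin p f

section Aux

variable (p f : ℕ) [Fact p.Prime]

lemma sigma_algebraMap (w : WittVector p (GaloisField p f)) :
    sigma p f (algebraMap _ (K0 p f) w) =
      algebraMap _ (K0 p f) (WittVector.frobeniusEquiv p (GaloisField p f) w) :=
  IsFractionRing.ringEquivOfRingEquiv_algebraMap _ w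

lemma frob_iterate (hf : f ≠ 0) (w : WittVector p (GaloisField p f)) :
    (⇑(WittVector.frobeniusEquiv p (GaloisField p f)))^[f] w = w := by
  haveI : Fintype (GaloisField p f) := Fintype.ofFinite _
  have hcard : Fintype.card (GaloisField p f) = p ^ f := by
    rw [← Nat.card_eq_fintype_card, GaloisField.card p f hf]
  have key : ∀ (m : ℕ) (w : WittVector p (GaloisField p f)) (n : ℕ),
      ((fun x => WittVector.frobenius x)^[m] w).coeff n = w.coeff n ^ p ^ m := by
    intro m
    induction m with
    | zero => intro w n; simp
    | succ m ih =>
      intro w n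
      rw [Function.iterate_succ_apply', WittVector.coeff_frobenius_charP, ih, ← pow_mul,
        pow_succ]
  have hc : (⇑(WittVector.frobeniusEquiv p (GaloisField p f))) =
      (fun x => WittVector.frobenius x) := rfl
  rw [hc]
  ext n
  rw [key f w n, ← hcard, FiniteField.pow_card]

lemma sigma_pow_f (hf : f ≠ 0) (x : K0 p f) : (sigma p f ^ f) x = x := by
  have hpowalg : ∀ (n : ℕ) (w : WittVector p (GaloisField p f)),
      (sigma p f ^ n) (algebraMap _ (K0 p f) w) =
        algebraMap _ (K0 p f) ((⇑(WittVector.frobeniusEquiv p (GaloisField p f)))^[n] w) := by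
    intro n
    induction n with
    | zero => intro w; rfl
    | succ n ih =>
      intro w
      rw [pow_succ]
      show (sigma p f ^ n) (sigma p f (algebraMap _ (K0 p f) w)) = _
      rw [sigma_algebraMap, ih, Function.iterate_succ_apply]
  have hhom : ((sigma p f ^ f : K0 p f ≃+* K0 p f) : K0 p f →+* K0 p f) = RingHom.id _ := by
    apply IsLocalization.ringHom_ext (nonZeroDivisors (WittVector p (GaloisField p f)))
    ext w
    simp only [RingHom.coe_comp, Function.comp_apply, RingHom.id_apply, RingEquiv.coe_toRingHom]
    rw [hpowalg f w, frob_iterate p f hf w]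
  have := RingHom.congr_fun hhom x
  simpa using this

lemma sigma_p_zpow (m : ℤ) : sigma p f ((p : K0 p f) ^ m) = (p : K0 p f) ^ m := by
  rw [map_zpow₀, map_natCast]

lemma p_ne_zero' : (p : K0 p f) ≠ 0 :=
  WittVector.FractionRing.p_nonzero p (GaloisField p f)

lemma p_zpow_ne_one (hf : f ≠ 0) {m : ℤ} (hm : m ≠ 0) : (p : K0 p f) ^ m ≠ 1 := by
  intro h
  have hnat : (p : K0 p f) ^ (m.natAbs : ℤ) = 1 := by
    rcases Int.natAbs_eq m with h1 | h1
    · rw [← h1]; exact h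
    · rw [← neg_neg (m.natAbs : ℤ), ← h1, zpow_neg, h, inv_one]
  rw [zpow_natCast] at hnat
  have hW : ((p ^ m.natAbs : ℕ) : WittVector p (GaloisField p f)) = 1 := by
    apply IsFractionRing.injective (WittVector p (GaloisField p f)) (K0 p f)
    rw [map_natCast, map_one]
    push_cast
    exact hnat
  have := congrArg (WittVector.ghostComponent 0) hW
  rw [map_natCast, map_one] at this
  have hp0 : ((p : ℕ) : GaloisField p f) = 0 := by
    exact_mod_cast CharP.cast_eq_zero (GaloisField p f) p
  rw [Nat.cast_pow, hp0, zero_pow (Int.natAbs_ne_zero.mpr hm)] at this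
  exact zero_ne_one this

lemma sigmaLin_apply (x : K0 p f) : sigmaLin p f x = sigma p f x := rfl

lemma sigmaLin_pow_apply (n : ℕ) (x : K0 p f) :
    ((sigmaLin p f) ^ n) x = (sigma p f ^ n) x := by
  induction n generalizing x with
  | zero => rfl
  | succ n ih =>
    rw [pow_succ, pow_succ, Module.End.mul_apply, ih]
    rfl

lemma sigmaLin_pow_f (hf : f ≠ 0) : (sigmaLin p f) ^ f = 1 :=
  LinearMap.ext fun x => by rw [sigmaLin_pow_apply, sigma_pow_f p f hf]; rfl

lemma sigmaLin_mul_smul (c : K0 p f) (L : Module.End ℤ (K0 p f)) :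
    sigmaLin p f * (c • L) = sigma p f c • (sigmaLin p f * L) := by
  ext x
  simp only [Module.End.mul_apply, LinearMap.smul_apply, sigmaLin_apply, smul_eq_mul, map_mul]

lemma twist_pow (i : ℤ) (n : ℕ) :
    (twist p f i) ^ n = ((p : K0 p f) ^ (i * n)) • ((sigmaLin p f) ^ n) := by
  induction n with
  | zero => simp
  | succ n ih =>
    rw [pow_succ']
    rw [ih, twist]
    rw [show ∀ (c : K0 p f) (L L' : Module.End ℤ (K0 p f)), (c • L) * L' = c • (L * L')
      from fun c L L' => rfl]
    rw [sigmaLin_mul_smul, sigma_p_zpow, smul_smul, ← zpow_add₀ (p_ne_zero' p f), ← pow_succ']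
    congr 2
    push_cast
    ring

lemma twist_smul_fixed (i : ℤ) (c : K0 p f) (hc : sigma p f c = c) (y : K0 p f) :
    twist p f i (c • y) = c • twist p f i y := by
  simp only [twist, LinearMap.smul_apply, sigmaLin_apply, smul_eq_mul, map_mul, hc]
  ring

/-- On `K₀` itself, `pⁱσ - 1` is a linear automorphism. -/
noncomputable def twistSubOne (i : ℤ) (hf : f ≠ 0) (hi : i ≠ 0) :
    (K0 p f) ≃ₗ[ℤ] K0 p f := by
  classical
  set A : Module.End ℤ (K0 p f) := twist p f i with hA
  set c₁ : K0 p f := (p : K0 p f) ^ (i * (f : ℤ)) with hc₁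
  have hfix : sigma p f ((c₁ - 1)⁻¹) = (c₁ - 1)⁻¹ := by
    rw [map_inv₀, map_sub, map_one, hc₁, sigma_p_zpow]
  have hmne : (i * (f : ℤ)) ≠ 0 := mul_ne_zero hi (Int.natCast_ne_zero.mpr hf)
  have hcne : c₁ - 1 ≠ 0 := sub_ne_zero.mpr (p_zpow_ne_one p f hf hmne)
  set B0 : Module.End ℤ (K0 p f) := ∑ k ∈ Finset.range f, A ^ k with hB0
  have hAf : A ^ f - 1 = (c₁ - 1) • (1 : Module.End ℤ (K0 p f)) := by
    rw [hA, twist_pow, sigmaLin_pow_f p f hf, sub_smul, one_smul]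
  have hgeom : B0 * (A - 1) = (c₁ - 1) • (1 : Module.End ℤ (K0 p f)) := by
    rw [hB0, geom_sum_mul, hAf]
  have hgeom' : (A - 1) * B0 = (c₁ - 1) • (1 : Module.End ℤ (K0 p f)) := by
    rw [hB0, mul_geom_sum, hAf]
  set D : Module.End ℤ (K0 p f) := (c₁ - 1)⁻¹ • B0 with hD
  have hleft : D * (A - 1) = 1 := by
    rw [hD, show ((c₁ - 1)⁻¹ • B0) * (A - 1) = (c₁ - 1)⁻¹ • (B0 * (A - 1)) from rfl,
      hgeom, smul_smul, inv_mul_cancel₀ hcne, one_smul]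
  have hright : (A - 1) * D = 1 := by
    ext x
    have h1 : D x = (c₁ - 1)⁻¹ • (B0 x) := rfl
    have h2 : (A - 1) ((c₁ - 1)⁻¹ • (B0 x)) = (c₁ - 1)⁻¹ • ((A - 1) (B0 x)) := by
      simp only [LinearMap.sub_apply, Module.End.one_apply, smul_sub]
      rw [hA, twist_smul_fixed p f i _ hfix]
    have h3 : (A - 1) (B0 x) = ((A - 1) * B0) x := rfl
    calc ((A - 1) * D) x = (A - 1) (D x) := rfl
      _ = (c₁ - 1)⁻¹ • ((A - 1) (B0 x)) := by rw [h1, h2]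
      _ = (c₁ - 1)⁻¹ • (((A - 1) * B0) x) := by rw [h3]
      _ = (c₁ - 1)⁻¹ • ((c₁ - 1) • x) := by rw [hgeom']; rfl
      _ = x := by rw [smul_smul, inv_mul_cancel₀ hcne, one_smul]
  exact LinearEquiv.ofLinear (A - 1) D
    (by rw [← Module.End.mul_eq_comp, hright, Module.End.one_eq_id])
    (by rw [← Module.End.mul_eq_comp, hleft, Module.End.one_eq_id])

lemma twistSubOne_coe (i : ℤ) (hf : f ≠ 0) (hi : i ≠ 0) :
    (twistSubOne p f i hf hi : K0 p f →ₗ[ℤ] K0 p f) = twist p f i - 1 := rfl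

end Aux

/-- for a nonzero integer `i` and a finitely generated abelian group `T`,
the additive endomorphism `x ↦ pⁱ·(1⊗σ)(x) − x` of `T ⊗_ℤ K₀` is bijective. -/
theorem twist_sub_id_bijective (p f : ℕ) [Fact p.Prime] (hf : f ≠ 0) (i : ℤ) (hi : i ≠ 0)
    (T : Type) [AddCommGroup T] [AddGroup.FG T] :
    Function.Bijective (fun x : T ⊗[ℤ] K0 p f =>
      TensorProduct.map (LinearMap.id : T →ₗ[ℤ] T) (twist p f i) x - x) := by
  classical
  set e0 := twistSubOne p f i hf hi with he0
  set M : T ⊗[ℤ] K0 p f →ₗ[ℤ] T ⊗[ℤ] K0 p f :=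
    TensorProduct.map LinearMap.id (e0 : K0 p f →ₗ[ℤ] K0 p f) with hM
  set Minv : T ⊗[ℤ] K0 p f →ₗ[ℤ] T ⊗[ℤ] K0 p f :=
    TensorProduct.map LinearMap.id (e0.symm : K0 p f →ₗ[ℤ] K0 p f) with hMinv
  have h1 : M.comp Minv = LinearMap.id := by
    apply TensorProduct.ext'
    intro t k
    show TensorProduct.map LinearMap.id (e0 : K0 p f →ₗ[ℤ] K0 p f)
      (TensorProduct.map LinearMap.id (e0.symm : K0 p f →ₗ[ℤ] K0 p f) (t ⊗ₜ k)) = t ⊗ₜ k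
    simp
  have h2 : Minv.comp M = LinearMap.id := by
    apply TensorProduct.ext'
    intro t k
    show TensorProduct.map LinearMap.id (e0.symm : K0 p f →ₗ[ℤ] K0 p f)
      (TensorProduct.map LinearMap.id (e0 : K0 p f →ₗ[ℤ] K0 p f) (t ⊗ₜ k)) = t ⊗ₜ k
    simp
  have hbij : Function.Bijective M :=
    ((LinearEquiv.ofLinear M Minv h1 h2 :
      (T ⊗[ℤ] K0 p f) ≃ₗ[ℤ] T ⊗[ℤ] K0 p f)).bijective
  have heq : (fun x : T ⊗[ℤ] K0 p f =>
      TensorProduct.map (LinearMap.id : T →ₗ[ℤ] T) (twist p f i) x - x) = ⇑M := by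
    have hsub : M = TensorProduct.map (LinearMap.id : T →ₗ[ℤ] T) (twist p f i)
        - LinearMap.id := by
      rw [hM, twistSubOne_coe]
      apply TensorProduct.ext'
      intro t k
      simp only [LinearMap.sub_apply, TensorProduct.map_tmul, LinearMap.id_apply,
        Module.End.one_apply, TensorProduct.tmul_sub, LinearMap.id_coe, id_eq]
      show _ = TensorProduct.map LinearMap.id (twist p f i) (t ⊗ₜ k) - t ⊗ₜ k
      rw [TensorProduct.map_tmul]
      rfl
    funext x
    exact (LinearMap.congr_fun hsub x).symm
  rw [heq]
  exact hbij
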